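/- If {E_i} are Kraus operators of a quantum channel E and there is a positive scalar matrix Λ = (λ_ij) with P_C E_i† E_j P_C = λ_ij P_C for all i, j, then there exists a quantum channel R such that R∘E(ρ) = ρ for all ρ with ρ = P_C ρ P_C. -/

import Mathlib

open Matrix ComplexOrder

/-- If the Kraus operators `E_i` of a channel satisfy the Knill–Laflamme conditions
`P E_i† E_j P = Λ_ij P` for a (positive) scalar matrix `Λ`, then there is a recovery
channel `R` correcting the code with projection `P`. -/
theorem correctable_of_knill_laflamme (N r : ℕ)
    (P : Matrix (Fin N) (Fin N) ℂ) (hP₁ : Pᴴ = P) (hP₂ : P * P = P)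
    (E : Fin r → Matrix (Fin N) (Fin N) ℂ)
    (hE : ∑ i, (E i)ᴴ * E i = 1)
    (Lam : Matrix (Fin r) (Fin r) ℂ) (hLam : Lam.PosSemidef)
    (hKL : ∀ i j, P * (E i)ᴴ * E j * P = Lam i j • P) :
    ∃ (s : ℕ) (R : Fin s → Matrix (Fin N) (Fin N) ℂ),
      ∑ j, (R j)ᴴ * R j = 1 ∧
        ∀ ρ : Matrix (Fin N) (Fin N) ℂ, ρ = P * ρ * P →
          ∑ j, R j * (∑ i, E i * ρ * (E i)ᴴ) * (R j)ᴴ = ρ := by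
  classical
  have hH : Lam.IsHermitian := hLam.1
  set U : Matrix (Fin r) (Fin r) ℂ := (hH.eigenvectorUnitary : Matrix (Fin r) (Fin r) ℂ) with hUdef
  have hU1 : Uᴴ * U = 1 := by
    simpa [hUdef, Matrix.star_eq_conjTranspose] using
      Matrix.mem_unitaryGroup_iff'.mp hH.eigenvectorUnitary.2
  have hU2 : U * Uᴴ = 1 := by
    simpa [hUdef, Matrix.star_eq_conjTranspose] using
      Matrix.mem_unitaryGroup_iff.mp hH.eigenvectorUnitary.2
  set d : Fin r → ℝ := hH.eigenvalues with hddef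
  have hd : ∀ k, 0 ≤ d k := fun k => hLam.eigenvalues_nonneg k
  have hspec : Uᴴ * Lam * U = Matrix.diagonal (fun k => (d k : ℂ)) := by
    have := hH.conjStarAlgAut_star_eigenvectorUnitary
    simpa [hUdef, hddef, Matrix.star_eq_conjTranspose, Function.comp, Function.comp_def, Unitary.conjStarAlgAut_star_apply] using this
  set F : Fin r → Matrix (Fin N) (Fin N) ℂ := fun k => ∑ i, U i k • E i with hFdef
  -- Knill-Laflamme for the rotated operators
  have hkl' : ∀ i j, P * ((E i)ᴴ * (E j * P)) = Lam i j • P := by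
    intro i j
    have := hKL i j
    simpa [mul_assoc] using this
  have hdiag : ∀ k l, P * ((F k)ᴴ * (F l * P)) = (if k = l then (d k : ℂ) else 0) • P := by
    intro k l
    have h1 : P * ((F k)ᴴ * (F l * P)) =
        ∑ j, ∑ i, (star (U i k) * U j l) • (P * ((E i)ᴴ * (E j * P))) := by
      simp only [hFdef, conjTranspose_sum, conjTranspose_smul, Finset.sum_mul, Finset.mul_sum,
        Finset.smul_sum, smul_mul_assoc, mul_smul_comm, smul_smul]
      refine Finset.sum_congr rfl fun j _ => Finset.sum_congr rfl fun i _ => ?_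
      rw [mul_comm]
    rw [h1]
    have h2 : ∀ i j, (star (U i k) * U j l) • (P * ((E i)ᴴ * (E j * P)))
        = (star (U i k) * Lam i j * U j l) • P := by
      intro i j
      rw [hkl' i j, smul_smul]
      ring_nf
    simp only [h2]
    have h3 : ∑ j, ∑ i, (star (U i k) * Lam i j * U j l) • P
        = ((Uᴴ * Lam * U) k l) • P := by
      rw [Matrix.mul_apply]
      simp only [Matrix.mul_apply, Matrix.conjTranspose_apply, Finset.sum_mul, Finset.sum_smul]
    rw [h3, hspec]
    simp [Matrix.diagonal_apply]
  -- vanishing for zero eigenvalues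
  have hF0 : ∀ k, d k = 0 → F k * P = 0 := by
    intro k hk
    rw [← Matrix.conjTranspose_mul_self_eq_zero]
    have : (F k * P)ᴴ * (F k * P) = P * ((F k)ᴴ * (F k * P)) := by
      rw [Matrix.conjTranspose_mul, hP₁, mul_assoc]
    rw [this, hdiag k k, hk]
    simp
  set W : Fin r → Matrix (Fin N) (Fin N) ℂ :=
    fun k => (((Real.sqrt (d k))⁻¹ : ℝ) : ℂ) • (F k * P) with hWdef
  have hFP : ∀ k, F k * P = ((Real.sqrt (d k) : ℝ) : ℂ) • W k := by
    intro k
    by_cases hk : d k = 0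
    · simp [hWdef, hF0 k hk, hk]
    · have hs : Real.sqrt (d k) ≠ 0 := Real.sqrt_ne_zero'.2 (lt_of_le_of_ne (hd k) (Ne.symm hk))
      rw [hWdef]
      simp only [smul_smul]
      rw [← Complex.ofReal_mul, mul_inv_cancel₀ hs]
      simp
  have hW0 : ∀ k, d k = 0 → W k = 0 := by
    intro k hk; simp [hWdef, hF0 k hk]
  have hWW : ∀ k l, (W k)ᴴ * W l = if k = l then (if d k = 0 then 0 else P) else 0 := by
    intro k l
    have h1 : (W k)ᴴ * W l = ((((Real.sqrt (d k))⁻¹ : ℝ) : ℂ) * (((Real.sqrt (d l))⁻¹ : ℝ) : ℂ))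
        • (P * ((F k)ᴴ * (F l * P))) := by
      rw [hWdef]
      simp only [Matrix.conjTranspose_smul, Matrix.conjTranspose_mul, hP₁,
        smul_mul_assoc, mul_smul_comm, smul_smul]
      rw [mul_assoc]
      congr 1
      simp only [Complex.star_def, Complex.conj_ofReal]
      ring
    rw [h1, hdiag k l]
    by_cases hkl : k = l
    · subst hkl
      by_cases hk : d k = 0
      · simp [hk]
      · have hs : Real.sqrt (d k) * Real.sqrt (d k) = d k := Real.mul_self_sqrt (hd k)
        have : ((Real.sqrt (d k))⁻¹ : ℝ) * ((Real.sqrt (d k))⁻¹ : ℝ) * d k = 1 := by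
          rw [← hs]
          have hsne : Real.sqrt (d k) ≠ 0 := by
            intro h; rw [h] at hs; simp at hs; exact hk hs.symm
          field_simp
          rw [Real.sqrt_sq (Real.sqrt_nonneg _)]
        have hc : ((((Real.sqrt (d k))⁻¹ : ℝ) : ℂ)) * ((((Real.sqrt (d k))⁻¹ : ℝ)) : ℂ)
            * ((d k : ℝ) : ℂ) = 1 := by
          rw [← Complex.ofReal_mul, ← Complex.ofReal_mul, this, Complex.ofReal_one]
        simp only [if_pos rfl, eq_self_iff_true, if_true, hk, if_false, smul_smul, ← mul_assoc, hc, one_smul]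
    · simp [hkl]
  have hWP : ∀ k, W k * P = W k := by
    intro k
    rw [hWdef]
    simp only [smul_mul_assoc, mul_assoc, hP₂]
  set S : Matrix (Fin N) (Fin N) ℂ := ∑ k, W k * (W k)ᴴ with hSdef
  have hSW : ∀ k, S * W k = W k := by
    intro k
    rw [hSdef, Finset.sum_mul]
    have h : ∀ m, W m * (W m)ᴴ * W k = if m = k then W k else 0 := by
      intro m
      rw [mul_assoc, hWW m k]
      by_cases hmk : m = k
      · subst hmk
        by_cases hm : d m = 0
        · simp [hm, hW0 m hm]
        · simp [hm, hWP m]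
      · simp [hmk]
    simp [h]
  have hSH : Sᴴ = S := by
    rw [hSdef]
    simp [conjTranspose_sum, Matrix.conjTranspose_mul, mul_assoc]
  have hSS : S * S = S := by
    calc S * S = ∑ k, S * W k * (W k)ᴴ := by
          conv_lhs => rw [hSdef, Finset.mul_sum]
          exact Finset.sum_congr rfl fun k _ => by rw [← mul_assoc]
    _ = S := by simp only [hSW]; exact hSdef.symm
  refine ⟨r + 1, Fin.snoc (fun k => (W k)ᴴ) (1 - S), ?_, ?_⟩
  · rw [Fin.sum_univ_castSucc]
    simp only [Fin.snoc_castSucc, Fin.snoc_last, conjTranspose_conjTranspose]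
    have h1S : (1 - S)ᴴ * (1 - S) = 1 - S := by
      rw [conjTranspose_sub, conjTranspose_one, hSH, sub_mul, one_mul, mul_sub, mul_one, hSS]
      abel
    rw [h1S, ← hSdef]
    abel
  · intro ρ hρ
    have hEdec : ∀ i, E i = ∑ k, star (U i k) • F k := by
      intro i
      simp only [hFdef, Finset.smul_sum, smul_smul]
      rw [Finset.sum_comm]
      have h : ∀ j, ∑ k, (star (U i k) * U j k) • E j
          = ((1 : Matrix (Fin r) (Fin r) ℂ) j i) • E j := by
        intro j
        rw [← Finset.sum_smul, ← hU2, Matrix.mul_apply]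
        congr 1
        refine Finset.sum_congr rfl fun k _ => ?_
        rw [Matrix.conjTranspose_apply, mul_comm]
      simp only [h, Matrix.one_apply]
      simp [ite_smul]
    have hstep : ∀ (i : Fin r), E i * ρ * (E i)ᴴ
        = ∑ k, ∑ l, (star (U i k) * U i l) • (F k * ρ * (F l)ᴴ) := by
      intro i
      conv_lhs => rw [hEdec i]
      simp only [conjTranspose_sum, conjTranspose_smul, Finset.sum_mul, Finset.mul_sum,
        Finset.smul_sum, smul_mul_assoc, mul_smul_comm, smul_smul, star_star]
      rw [Finset.sum_comm]
      refine Finset.sum_congr rfl fun k _ => Finset.sum_congr rfl fun l _ => ?_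
      rw [mul_comm]
    have key1 : (∑ i, E i * ρ * (E i)ᴴ) = ∑ k, F k * ρ * (F k)ᴴ := by
      simp only [hstep]
      rw [Finset.sum_comm]
      refine Finset.sum_congr rfl fun k _ => ?_
      rw [Finset.sum_comm]
      have h : ∀ l, ∑ i, (star (U i k) * U i l) • (F k * ρ * (F l)ᴴ)
          = ((1 : Matrix (Fin r) (Fin r) ℂ) k l) • (F k * ρ * (F l)ᴴ) := by
        intro l
        rw [← Finset.sum_smul, ← hU1, Matrix.mul_apply]
        congr 1
      simp only [h, Matrix.one_apply]
      simp [ite_smul]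
    have key2 : ∀ k, F k * ρ * (F k)ᴴ = (d k : ℂ) • (W k * ρ * (W k)ᴴ) := by
      intro k
      have h : F k * ρ * (F k)ᴴ = (F k * P) * ρ * (F k * P)ᴴ := by
        rw [Matrix.conjTranspose_mul, hP₁]
        conv_lhs => rw [hρ]
        simp only [mul_assoc]
      rw [h, hFP k]
      simp only [conjTranspose_smul, smul_mul_assoc, mul_smul_comm, smul_smul]
      congr 1
      simp only [Complex.star_def, Complex.conj_ofReal, ← Complex.ofReal_mul,
        Real.mul_self_sqrt (hd k)]
    have hEρ : (∑ i, E i * ρ * (E i)ᴴ) = ∑ k, (d k : ℂ) • (W k * ρ * (W k)ᴴ) := by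
      rw [key1]; exact Finset.sum_congr rfl fun k _ => key2 k
    rw [Fin.sum_univ_castSucc]
    simp only [Fin.snoc_castSucc, Fin.snoc_last, conjTranspose_conjTranspose, hEρ]
    have hterm : ∀ m : Fin r, (W m)ᴴ * (∑ k, (d k : ℂ) • (W k * ρ * (W k)ᴴ)) * W m
        = (d m : ℂ) • ρ := by
      intro m
      rw [Finset.mul_sum, Finset.sum_mul]
      have h : ∀ k, (W m)ᴴ * ((d k : ℂ) • (W k * ρ * (W k)ᴴ)) * W m
          = (if k = m then (d m : ℂ) else 0) • ρ := by
        intro k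
        have e1 : (W m)ᴴ * ((d k : ℂ) • (W k * ρ * (W k)ᴴ)) * W m
            = (d k : ℂ) • (((W m)ᴴ * W k) * ρ * ((W k)ᴴ * W m)) := by
          simp only [Matrix.mul_smul, Matrix.smul_mul, mul_assoc]
        rw [e1, hWW m k, hWW k m]
        by_cases hkm : k = m
        · subst hkm
          by_cases hk : d k = 0
          · simp [hk]
          · simp only [if_pos rfl, eq_self_iff_true, if_true, hk, if_false]
            rw [← hρ]
        · have hmk : ¬ m = k := fun h => hkm h.symm
          simp [hkm, hmk]
      simp only [h]
      simp
    have hQ : ∀ k, (1 - S) * W k = 0 := by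
      intro k; rw [sub_mul, one_mul, hSW k, sub_self]
    have hlast : (1 - S) * (∑ k, (d k : ℂ) • (W k * ρ * (W k)ᴴ)) * (1 - S)ᴴ = 0 := by
      rw [Finset.mul_sum, Finset.sum_mul]
      apply Finset.sum_eq_zero
      intro k _
      have e1 : (1 - S) * ((d k : ℂ) • (W k * ρ * (W k)ᴴ)) * (1 - S)ᴴ
          = (d k : ℂ) • (((1 - S) * W k) * ρ * ((W k)ᴴ * (1 - S)ᴴ)) := by
        simp only [Matrix.mul_smul, Matrix.smul_mul, mul_assoc]
      rw [e1, hQ k]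
      simp
    rw [hlast]
    simp only [hterm]
    rw [add_zero, ← Finset.sum_smul]
    have htr : (∑ m, (d m : ℂ)) = ∑ i, Lam i i := by
      have h2 : Lam = U * Matrix.diagonal (fun k => (d k : ℂ)) * Uᴴ := by
        simpa [hUdef, hddef, Matrix.star_eq_conjTranspose, Function.comp, Function.comp_def]
          using hH.spectral_theorem
      calc (∑ m, (d m : ℂ)) = (Matrix.diagonal fun k => (d k : ℂ)).trace := by
            rw [Matrix.trace_diagonal]
      _ = (U * Matrix.diagonal (fun k => (d k : ℂ)) * Uᴴ).trace := by
            rw [Matrix.trace_mul_comm, ← mul_assoc, hU1, one_mul]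
      _ = Lam.trace := by rw [← h2]
      _ = ∑ i, Lam i i := by simp [Matrix.trace, Matrix.diag]
    have hsP : (∑ i, Lam i i) • P = P := by
      have h1 : ∑ i, P * (E i)ᴴ * E i * P = ∑ i, Lam i i • P :=
        Finset.sum_congr rfl fun i _ => hKL i i
      rw [← Finset.sum_smul] at h1
      rw [← h1]
      calc ∑ i, P * (E i)ᴴ * E i * P = P * (∑ i, (E i)ᴴ * E i) * P := by
            rw [Finset.mul_sum, Finset.sum_mul]
            exact Finset.sum_congr rfl fun i _ => by simp only [mul_assoc]
      _ = P := by rw [hE, mul_one, hP₂]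
    rw [htr]
    conv_lhs => rw [hρ]
    rw [show (∑ i, Lam i i) • (P * ρ * P) = ((∑ i, Lam i i) • P) * ρ * P by
      simp only [smul_mul_assoc], hsP, ← hρ]
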